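/- The two-dimensional Hilbert curve admits a valid ordering h^{-1} of the unit square that is monotone along the bottom edge and along the ascending diagonal: h^{-1}((t,0)) is strictly increasing in t for t in [0,1], and h^{-1}((t,t)) is strictly increasing in t for t in [0,1]. -/

import Mathlib

namespace HilbertAux

/-- States: B = bottom edge (param x, point (x,0)), L = left edge (param y, point (0,y)),
    R = right edge (param z, point (1,1-z)), D = diagonal (param t, point (t,t)). -/
inductive St | B | L | R | D
deriving DecidableEq

open St

noncomputable def bitb (x : ℝ) : Bool := decide ((1:ℝ)/2 ≤ x)

noncomputable def nxt (x : ℝ) : ℝ := if (1:ℝ)/2 ≤ x then 2*x - 1 else 2*x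

def stp : St → Bool → ℕ × St
  | B, false => (0, L)
  | B, true  => (3, R)
  | L, false => (0, B)
  | L, true  => (1, L)
  | R, false => (2, R)
  | R, true  => (3, B)
  | D, false => (0, D)
  | D, true  => (2, D)

noncomputable def xs (x : ℝ) : ℕ → ℝ
  | 0 => x
  | n+1 => nxt (xs x n)

noncomputable def ss (s : St) (x : ℝ) : ℕ → St
  | 0 => s
  | n+1 => (stp (ss s x n) (bitb (xs x n))).2

noncomputable def dg (s : St) (x : ℝ) (n : ℕ) : ℕ := (stp (ss s x n) (bitb (xs x n))).1

noncomputable def f (s : St) (x : ℝ) : ℝ := ∑' n, (dg s x n : ℝ) / 4^(n+1)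

lemma nxt_mem {x : ℝ} (hx : x ∈ Set.Ico (0:ℝ) 1) : nxt x ∈ Set.Ico (0:ℝ) 1 := by
  unfold nxt; split <;> constructor <;> simp at * <;> linarith [hx.1, hx.2]

lemma xs_mem {x : ℝ} (hx : x ∈ Set.Ico (0:ℝ) 1) (n : ℕ) : xs x n ∈ Set.Ico (0:ℝ) 1 := by
  induction n with
  | zero => exact hx
  | succ n ih => exact nxt_mem ih

lemma dg_le (s : St) (x : ℝ) (n : ℕ) : dg s x n ≤ 3 := by
  unfold dg; cases (ss s x n) <;> cases (bitb (xs x n)) <;> simp [stp]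

lemma summable_dg (s : St) (x : ℝ) : Summable (fun n => (dg s x n : ℝ) / 4^(n+1)) := by
  apply Summable.of_nonneg_of_le (f := fun n => 3 * (1/4:ℝ)^n)
  · intro n; positivity
  · intro n
    rw [div_le_iff₀ (by positivity)]
    have : ((dg s x n : ℝ)) ≤ 3 := by exact_mod_cast dg_le s x n
    calc (dg s x n : ℝ) ≤ 3 := this
      _ ≤ 3 * (1/4:ℝ)^n * 4^(n+1) := by
          rw [pow_succ]
          have : (1/4:ℝ)^n * 4^n = 1 := by
            rw [← mul_pow]; norm_num
          nlinarith [this]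
  · exact (summable_geometric_of_lt_one (by norm_num) (by norm_num)).mul_left 3

lemma tsum_three : ∑' n : ℕ, (3:ℝ) / 4^(n+1) = 1 := by
  have h1 : ∀ n : ℕ, (3:ℝ) / 4^(n+1) = (3/4) * (1/4)^n := by
    intro n; rw [pow_succ, one_div, inv_pow, div_eq_mul_inv, mul_inv, div_eq_mul_inv]; ring
  simp only [h1]
  rw [tsum_mul_left, tsum_geometric_of_lt_one (by norm_num) (by norm_num)]
  norm_num

lemma tsum_two : ∑' n : ℕ, (2:ℝ) / 4^(n+1) = 2/3 := by
  have h1 : ∀ n : ℕ, (2:ℝ) / 4^(n+1) = (2/4) * (1/4)^n := by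
    intro n; rw [pow_succ, one_div, inv_pow, div_eq_mul_inv, mul_inv, div_eq_mul_inv]; ring
  simp only [h1]
  rw [tsum_mul_left, tsum_geometric_of_lt_one (by norm_num) (by norm_num)]
  norm_num

lemma f_nonneg (s : St) (x : ℝ) : 0 ≤ f s x :=
  tsum_nonneg (fun n => by positivity)

lemma summable_const_div (c : ℝ) : Summable (fun n : ℕ => c / 4^(n+1)) := by
  have h1 : ∀ n : ℕ, c / 4^(n+1) = (c/4) * (1/4)^n := by
    intro n; rw [pow_succ, one_div, inv_pow, div_eq_mul_inv, mul_inv, div_eq_mul_inv]; ring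
  simp only [h1]
  exact (summable_geometric_of_lt_one (by norm_num) (by norm_num)).mul_left _

lemma f_le_one (s : St) (x : ℝ) : f s x ≤ 1 := by
  rw [← tsum_three]
  refine Summable.tsum_le_tsum (fun n => ?_) (summable_dg s x) (summable_const_div 3)
  apply div_le_div_of_nonneg_right _ (by positivity)
  exact_mod_cast dg_le s x n


lemma xs_succ (x : ℝ) (n : ℕ) : xs x (n+1) = xs (nxt x) n := by
  induction n with
  | zero => rfl
  | succ n ih => show nxt (xs x (n+1)) = nxt (xs (nxt x) n); rw [ih]

lemma ss_succ (s : St) (x : ℝ) (n : ℕ) :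
    ss s x (n+1) = ss (stp s (bitb x)).2 (nxt x) n := by
  induction n with
  | zero => rfl
  | succ n ih =>
    show (stp (ss s x (n+1)) (bitb (xs x (n+1)))).2 = _
    rw [ih, xs_succ]; rfl

lemma dg_succ (s : St) (x : ℝ) (n : ℕ) :
    dg s x (n+1) = dg (stp s (bitb x)).2 (nxt x) n := by
  unfold dg; rw [ss_succ, xs_succ]

lemma f_shift (s : St) (x : ℝ) :
    f s x = (((stp s (bitb x)).1 : ℝ) + f (stp s (bitb x)).2 (nxt x)) / 4 := by
  unfold f
  rw [Summable.tsum_eq_zero_add (summable_dg s x)]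
  have h0 : (dg s x 0 : ℝ) / 4^(0+1) = ((stp s (bitb x)).1 : ℝ) / 4 := by
    unfold dg; norm_num [ss, xs]
  have h1 : ∀ n : ℕ, (dg s x (n+1) : ℝ) / 4^(n+1+1) =
      ((dg (stp s (bitb x)).2 (nxt x) n : ℝ) / 4^(n+1)) / 4 := by
    intro n; rw [dg_succ]; rw [pow_succ]; ring
  rw [h0]
  rw [tsum_congr h1, tsum_div_const]
  ring

lemma f_prefix (s : St) (x : ℝ) (n : ℕ) :
    f s x = (∑ i ∈ Finset.range n, (dg s x i : ℝ) / 4^(i+1)) + f (ss s x n) (xs x n) / 4^n := by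
  induction n with
  | zero => simp [ss, xs]
  | succ n ih =>
    rw [ih, Finset.sum_range_succ]
    have hstep : f (ss s x n) (xs x n)
        = ((dg s x n : ℝ) + f (ss s x (n+1)) (xs x (n+1))) / 4 := f_shift _ _
    rw [hstep, pow_succ]
    ring

/-- if all bits from some point on were 1, the point would exceed 1 -/
lemma exists_bit_false {x : ℝ} (hx : x ∈ Set.Ico (0:ℝ) 1) : ∃ n, bitb (xs x n) = false := by
  by_contra hc
  push_neg at hc
  have hall : ∀ n, (1:ℝ)/2 ≤ xs x n := by
    intro n
    have := hc n
    simpa [bitb] using this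
  have hstep : ∀ n, 1 - xs x (n+1) = 2 * (1 - xs x n) := by
    intro n
    show 1 - nxt (xs x n) = _
    rw [nxt, if_pos (hall n)]; ring
  have hgrow : ∀ n, 1 - xs x n = 2^n * (1 - x) := by
    intro n
    induction n with
    | zero => simp [xs]
    | succ n ih => rw [hstep n, ih, pow_succ]; ring
  obtain ⟨n, hn⟩ := pow_unbounded_of_one_lt (1 / (1 - x)) (by norm_num : (1:ℝ) < 2)
  have hx1 : 0 < 1 - x := by linarith [hx.2]
  have h2 : 1 - xs x n ≤ 1 := by linarith [(xs_mem hx n).1]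
  rw [hgrow n] at h2
  rw [div_lt_iff₀ hx1] at hn
  linarith

lemma exists_bit_true {x : ℝ} (hx : x ∈ Set.Ico (0:ℝ) 1) (hx0 : 0 < x) :
    ∃ n, bitb (xs x n) = true := by
  by_contra hc
  push_neg at hc
  have hall : ∀ n, xs x n < (1:ℝ)/2 := by
    intro n
    have := hc n
    simp only [bitb, ne_eq, decide_eq_true_eq] at this
    exact not_le.mp this
  have hgrow : ∀ n, xs x n = 2^n * x := by
    intro n
    induction n with
    | zero => simp [xs]
    | succ n ih =>
      show nxt (xs x n) = _
      rw [nxt, if_neg (not_le.mpr (hall n)), ih, pow_succ]; ring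
  obtain ⟨n, hn⟩ := pow_unbounded_of_one_lt (1 / x) (by norm_num : (1:ℝ) < 2)
  have h2 : xs x n < 1 := (xs_mem hx n).2
  rw [hgrow n] at h2
  rw [div_lt_iff₀ hx0] at hn
  nlinarith

lemma stp_false_fst_le (s : St) : (stp s false).1 ≤ 2 := by cases s <;> simp [stp]

lemma f_lt_one {s : St} {x : ℝ} (hx : x ∈ Set.Ico (0:ℝ) 1) : f s x < 1 := by
  obtain ⟨n, hn⟩ := exists_bit_false hx
  rw [← tsum_three]
  refine Summable.tsum_lt_tsum (f := fun i => (dg s x i : ℝ)/4^(i+1)) (i := n)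
    (fun i => ?_) ?_ (summable_dg s x) (summable_const_div 3)
  · apply div_le_div_of_nonneg_right _ (by positivity)
    exact (by exact_mod_cast dg_le s x i : ((dg s x i : ℕ) : ℝ) ≤ 3)
  · show (dg s x n : ℝ)/4^(n+1) < 3/4^(n+1)
    apply div_lt_div_of_pos_right _ (by positivity)
    have : dg s x n ≤ 2 := by
      unfold dg; rw [hn]; exact stp_false_fst_le _
    have : (dg s x n : ℝ) ≤ 2 := by exact_mod_cast this
    linarith

lemma ss_D (x : ℝ) (n : ℕ) : ss St.D x n = St.D := by
  induction n with
  | zero => rfl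
  | succ n ih =>
    show (stp (ss St.D x n) (bitb (xs x n))).2 = St.D
    rw [ih]; cases (bitb (xs x n)) <;> rfl

lemma dg_D_le (x : ℝ) (n : ℕ) : dg St.D x n ≤ 2 := by
  unfold dg; rw [ss_D]; cases (bitb (xs x n)) <;> simp [stp]

lemma fD_lt {x : ℝ} (hx : x ∈ Set.Ico (0:ℝ) 1) : f St.D x < 2/3 := by
  obtain ⟨n, hn⟩ := exists_bit_false hx
  rw [← tsum_two]
  refine Summable.tsum_lt_tsum (i := n) (fun i => ?_) ?_ (summable_dg St.D x) (summable_const_div 2)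
  · apply div_le_div_of_nonneg_right _ (by positivity)
    exact (by exact_mod_cast dg_D_le x i : ((dg St.D x i : ℕ) : ℝ) ≤ 2)
  · have : dg St.D x n = 0 := by unfold dg; rw [ss_D, hn]; rfl
    rw [this]
    show ((0:ℕ):ℝ)/4^(n+1) < 2/4^(n+1)
    apply div_lt_div_of_pos_right (by norm_num) (by positivity)

lemma fD_pos {x : ℝ} (hx : x ∈ Set.Ico (0:ℝ) 1) (hx0 : 0 < x) : 0 < f St.D x := by
  obtain ⟨n, hn⟩ := exists_bit_true hx hx0
  have hterm : (0:ℝ) < (dg St.D x n : ℝ) / 4^(n+1) := by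
    have : dg St.D x n = 2 := by unfold dg; rw [ss_D, hn]; rfl
    rw [this]; positivity
  calc (0:ℝ) < (dg St.D x n : ℝ) / 4^(n+1) := hterm
    _ ≤ f St.D x := Summable.le_tsum (summable_dg St.D x) n (fun i _ => by positivity)

lemma xs_zero (n : ℕ) : xs (0:ℝ) n = 0 := by
  induction n with
  | zero => rfl
  | succ n ih => show nxt (xs 0 n) = 0; rw [ih, nxt, if_neg (by norm_num)]; ring

lemma notR_step {s : St} (hs : s ≠ St.R) : (stp s false).2 ≠ St.R := by
  cases s <;> simp_all [stp]

lemma notR_dg {s : St} (hs : s ≠ St.R) : (stp s false).1 = 0 := by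
  cases s <;> simp_all [stp]

lemma f_zero {s : St} (hs : s ≠ St.R) : f s 0 = 0 := by
  have hbit : bitb (0:ℝ) = false := by simp [bitb]
  have hss : ∀ n, ss s 0 n ≠ St.R := by
    intro n
    induction n with
    | zero => exact hs
    | succ n ih =>
      show (stp (ss s 0 n) (bitb (xs 0 n))).2 ≠ St.R
      rw [xs_zero, hbit]; exact notR_step ih
  have hdg : ∀ n, dg s 0 n = 0 := by
    intro n; unfold dg; rw [xs_zero, hbit]; exact notR_dg (hss n)
  unfold f
  simp [hdg]

noncomputable def phi : ℕ → ℝ × ℝ → ℝ × ℝ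
  | 0 => fun p => (p.2/2, p.1/2)
  | 1 => fun p => (p.1/2, p.2/2 + 1/2)
  | 2 => fun p => (p.1/2 + 1/2, p.2/2 + 1/2)
  | 3 => fun p => ((1-p.2)/2 + 1/2, (1-p.1)/2)
  | _ => id

lemma abs_le_dist_fst (a b : ℝ × ℝ) : |a.1 - b.1| ≤ dist a b := by
  rw [Prod.dist_eq, Real.dist_eq]; exact le_max_left _ _

lemma abs_le_dist_snd (a b : ℝ × ℝ) : |a.2 - b.2| ≤ dist a b := by
  rw [Prod.dist_eq, Real.dist_eq]; exact le_max_right _ _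

lemma phi_lip {d : ℕ} (hd : d ≤ 3) (a b : ℝ × ℝ) :
    dist (phi d a) (phi d b) ≤ dist a b / 2 := by
  have h1 := abs_le.mp (abs_le_dist_fst a b)
  have h2 := abs_le.mp (abs_le_dist_snd a b)
  interval_cases d <;>
    (rw [Prod.dist_eq]
     apply max_le <;>
       (simp only [phi, Real.dist_eq]
        rw [abs_le]
        constructor <;> linarith [h1.1, h1.2, h2.1, h2.2]))

noncomputable def pt : St → ℝ → ℝ × ℝ
  | St.B => fun x => (x, 0)
  | St.L => fun y => (0, y)
  | St.R => fun z => (1, 1-z)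
  | St.D => fun t => (t, t)

lemma pt_mem {s : St} {x : ℝ} (hx : x ∈ Set.Icc (0:ℝ) 1) :
    pt s x ∈ Set.Icc (0:ℝ) 1 ×ˢ Set.Icc (0:ℝ) 1 := by
  obtain ⟨h0, h1⟩ := hx
  cases s <;> constructor <;> constructor <;> simp [pt] <;> linarith

lemma pt_step (s : St) {x : ℝ} (hx : x ∈ Set.Ico (0:ℝ) 1) :
    pt s x = phi (stp s (bitb x)).1 (pt (stp s (bitb x)).2 (nxt x)) := by
  by_cases hb : (1:ℝ)/2 ≤ x
  · have hbit : bitb x = true := by simp only [bitb, decide_eq_true_eq]; exact hb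
    rw [hbit, nxt, if_pos hb]
    cases s <;> · simp only [stp, pt, phi]; exact Prod.ext (by ring) (by ring)
  · have hbit : bitb x = false := by simp only [bitb, decide_eq_false_iff_not]; exact hb
    rw [hbit, nxt, if_neg hb]
    cases s <;> · simp only [stp, pt, phi]; exact Prod.ext (by ring) (by ring)

lemma stp_fst_le (s : St) (b : Bool) : (stp s b).1 ≤ 3 := by
  cases s <;> cases b <;> simp [stp]

section Curve

variable {h : ℝ → ℝ × ℝ}
variable (hmaps : Set.MapsTo h (Set.Icc 0 1) (Set.Icc (0 : ℝ) 1 ×ˢ Set.Icc (0 : ℝ) 1))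
variable (e1 : ∀ t ∈ Set.Icc (0 : ℝ) 1, h (t / 4) = ((h t).2 / 2, (h t).1 / 2))
variable (e2 : ∀ t ∈ Set.Icc (0 : ℝ) 1, h ((1 + t) / 4) = ((h t).1 / 2, (h t).2 / 2 + 1 / 2))
variable (e3 : ∀ t ∈ Set.Icc (0 : ℝ) 1,
      h ((2 + t) / 4) = ((h t).1 / 2 + 1 / 2, (h t).2 / 2 + 1 / 2))
variable (e4 : ∀ t ∈ Set.Icc (0 : ℝ) 1,
      h ((3 + t) / 4) = ((1 - (h t).2) / 2 + 1 / 2, (1 - (h t).1) / 2))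

include e1 e2 e3 e4 in
lemma h_step {d : ℕ} (hd : d ≤ 3) {u : ℝ} (hu : u ∈ Set.Icc (0:ℝ) 1) :
    h ((d + u)/4) = phi d (h u) := by
  interval_cases d
  · have := e1 u hu; rw [show ((0:ℕ):ℝ) + u = u by norm_num]; exact this ▸ rfl
  · have := e2 u hu; rw [show ((1:ℕ):ℝ) + u = 1 + u by norm_num]; rw [this]; rfl
  · have := e3 u hu; rw [show ((2:ℕ):ℝ) + u = 2 + u by norm_num]; rw [this]; rfl
  · have := e4 u hu; rw [show ((3:ℕ):ℝ) + u = 3 + u by norm_num]; rw [this]; rfl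

include hmaps e1 e2 e3 e4 in
lemma dist_key (n : ℕ) : ∀ (s : St) (x : ℝ), x ∈ Set.Ico (0:ℝ) 1 →
    dist (h (f s x)) (pt s x) ≤ (1/2)^n := by
  induction n with
  | zero =>
    intro s x hx
    have hm : f s x ∈ Set.Icc (0:ℝ) 1 := ⟨f_nonneg s x, f_le_one s x⟩
    have h1 := hmaps hm
    have h2 := pt_mem (s := s) (Set.Ico_subset_Icc_self hx)
    rw [Set.mem_prod] at h1 h2
    obtain ⟨⟨a1, a2⟩, a3, a4⟩ := h1
    obtain ⟨⟨b1, b2⟩, b3, b4⟩ := h2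
    rw [Prod.dist_eq]
    apply max_le <;> (rw [Real.dist_eq, abs_le]; norm_num; constructor <;> linarith)
  | succ n ih =>
    intro s x hx
    set d := (stp s (bitb x)).1 with hd
    set s' := (stp s (bitb x)).2 with hs'
    have hx' : nxt x ∈ Set.Ico (0:ℝ) 1 := nxt_mem hx
    have hu : f s' (nxt x) ∈ Set.Icc (0:ℝ) 1 := ⟨f_nonneg _ _, f_le_one _ _⟩
    have hdle : d ≤ 3 := stp_fst_le s _
    have heq : h (f s x) = phi d (h (f s' (nxt x))) := by
      rw [f_shift s x, ← hd, ← hs']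
      exact h_step e1 e2 e3 e4 hdle hu
    rw [heq, pt_step s hx, ← hd, ← hs']
    calc dist (phi d (h (f s' (nxt x)))) (phi d (pt s' (nxt x)))
        ≤ dist (h (f s' (nxt x))) (pt s' (nxt x)) / 2 := phi_lip hdle _ _
      _ ≤ (1/2)^n / 2 := by linarith [ih s' (nxt x) hx']
      _ = (1/2)^(n+1) := by rw [pow_succ]; ring

include hmaps e1 e2 e3 e4 in
lemma h_f (s : St) {x : ℝ} (hx : x ∈ Set.Ico (0:ℝ) 1) : h (f s x) = pt s x := by
  by_contra hne
  have hd : 0 < dist (h (f s x)) (pt s x) := dist_pos.mpr hne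
  obtain ⟨n, hn⟩ := exists_pow_lt_of_lt_one hd (by norm_num : (1:ℝ)/2 < 1)
  exact absurd (dist_key hmaps e1 e2 e3 e4 n s x hx) (by linarith)

include e4 in
lemma h_one : h 1 = ((1:ℝ), (0:ℝ)) := by
  have h14 := e4 1 (by norm_num)
  rw [show ((3:ℝ) + 1)/4 = 1 by norm_num] at h14
  have ha : (h 1).1 = (1 - (h 1).2)/2 + 1/2 := by
    conv_lhs => rw [h14]
  have hb : (h 1).2 = (1 - (h 1).1)/2 := by
    conv_lhs => rw [h14]
  rw [Prod.ext_iff]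
  constructor <;> [skip; skip] <;> dsimp <;> linarith

include e3 in
lemma h_twothirds : h (2/3) = ((1:ℝ), (1:ℝ)) := by
  have h23 := e3 (2/3) (by norm_num)
  rw [show ((2:ℝ) + 2/3)/4 = 2/3 by norm_num] at h23
  have ha : (h (2/3)).1 = (h (2/3)).1/2 + 1/2 := by
    conv_lhs => rw [h23]
  have hb : (h (2/3)).2 = (h (2/3)).2/2 + 1/2 := by
    conv_lhs => rw [h23]
  rw [Prod.ext_iff]
  constructor <;> [skip; skip] <;> dsimp <;> linarith

end Curve

lemma stp_false_lt_true (s : St) : (stp s false).1 + 1 ≤ (stp s true).1 := by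
  cases s <;> simp [stp]

lemma bitb_true_iff {u : ℝ} : bitb u = true ↔ (1:ℝ)/2 ≤ u := by
  simp only [bitb, decide_eq_true_eq]

lemma bitb_false_iff {u : ℝ} : bitb u = false ↔ ¬ ((1:ℝ)/2 ≤ u) := by
  simp only [bitb, decide_eq_false_iff_not]

lemma bitb_mono {u v : ℝ} (huv : u ≤ v) (hu : bitb u = true) : bitb v = true := by
  simp only [bitb, decide_eq_true_eq] at *
  linarith

lemma f_mono (s : St) {x y : ℝ} (hx : x ∈ Set.Ico (0:ℝ) 1) (hy : y ∈ Set.Ico (0:ℝ) 1)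
    (hxy : x < y) : f s x < f s y := by
  classical
  -- the bit sequences must differ somewhere
  have hdiff : ∃ n, bitb (xs x n) ≠ bitb (xs y n) := by
    by_contra hc
    push_neg at hc
    have hgrow : ∀ n, xs y n - xs x n = 2^n * (y - x) := by
      intro n
      induction n with
      | zero => simp [xs]
      | succ n ih =>
        show nxt (xs y n) - nxt (xs x n) = _
        have hb := hc n
        unfold nxt
        by_cases hcase : (1:ℝ)/2 ≤ xs x n
        · have hby : bitb (xs y n) = true := hb ▸ (bitb_true_iff.mpr hcase)
          have : (1:ℝ)/2 ≤ xs y n := bitb_true_iff.mp hby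
          rw [if_pos hcase, if_pos this, pow_succ]; nlinarith [ih]
        · have hbx : bitb (xs x n) = false := bitb_false_iff.mpr hcase
          have hby : bitb (xs y n) = false := hb ▸ hbx
          have : ¬ ((1:ℝ)/2 ≤ xs y n) := bitb_false_iff.mp hby
          rw [if_neg hcase, if_neg this, pow_succ]; nlinarith [ih]
    obtain ⟨n, hn⟩ := pow_unbounded_of_one_lt (1 / (y - x)) (by norm_num : (1:ℝ) < 2)
    have hyx : 0 < y - x := by linarith
    have h2 : xs y n - xs x n < 1 := by linarith [(xs_mem hx n).1, (xs_mem hy n).2]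
    rw [hgrow n] at h2
    rw [div_lt_iff₀ hyx] at hn
    linarith
  let k := Nat.find hdiff
  have hk : bitb (xs x k) ≠ bitb (xs y k) := Nat.find_spec hdiff
  have hmin : ∀ i < k, bitb (xs x i) = bitb (xs y i) := by
    intro i hi
    have := Nat.find_min hdiff hi
    push_neg at this
    exact this
  -- states agree up to k
  have hss : ∀ i, i ≤ k → ss s x i = ss s y i := by
    intro i hi
    induction i with
    | zero => rfl
    | succ i ih =>
      show (stp (ss s x i) (bitb (xs x i))).2 = (stp (ss s y i) (bitb (xs y i))).2
      rw [ih (le_of_lt (Nat.lt_of_succ_le hi)), hmin i (Nat.lt_of_succ_le hi)]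
  -- the parameters keep ordered gap up to k
  have hgap : ∀ i, i ≤ k → xs y i - xs x i = 2^i * (y - x) := by
    intro i hi
    induction i with
    | zero => simp [xs]
    | succ i ih =>
      have hi' : i < k := Nat.lt_of_succ_le hi
      have hb := hmin i hi'
      show nxt (xs y i) - nxt (xs x i) = _
      unfold nxt
      by_cases hcase : (1:ℝ)/2 ≤ xs x i
      · have hby : bitb (xs y i) = true := hb ▸ (bitb_true_iff.mpr hcase)
        have : (1:ℝ)/2 ≤ xs y i := bitb_true_iff.mp hby
        rw [if_pos hcase, if_pos this, pow_succ]; nlinarith [ih (le_of_lt hi')]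
      · have hbx : bitb (xs x i) = false := bitb_false_iff.mpr hcase
        have hby : bitb (xs y i) = false := hb ▸ hbx
        have : ¬ ((1:ℝ)/2 ≤ xs y i) := bitb_false_iff.mp hby
        rw [if_neg hcase, if_neg this, pow_succ]; nlinarith [ih (le_of_lt hi')]
  have hlt : xs x k < xs y k := by
    have := hgap k (le_refl k)
    nlinarith [this, pow_pos (by norm_num : (0:ℝ) < 2) k]
  -- bits at k: x has bit 0, y has bit 1
  have hbx : bitb (xs x k) = false := by
    cases hcx : bitb (xs x k) with
    | false => rfl
    | true => exact absurd (bitb_mono hlt.le hcx) (fun hcy => hk (hcx.trans hcy.symm))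
  have hby : bitb (xs y k) = true := by
    cases hcy : bitb (xs y k) with
    | false => exact absurd (hbx.trans hcy.symm) hk
    | true => rfl
  -- common prefix
  have hpre : ∀ i < k, dg s x i = dg s y i := by
    intro i hi
    unfold dg
    rw [hss i hi.le, hmin i hi]
  -- decompose both values
  have hfx := f_prefix s x (k+1)
  have hfy := f_prefix s y (k+1)
  rw [Finset.sum_range_succ] at hfx hfy
  have hsum : ∑ i ∈ Finset.range k, (dg s x i : ℝ) / 4^(i+1)
      = ∑ i ∈ Finset.range k, (dg s y i : ℝ) / 4^(i+1) := by
    apply Finset.sum_congr rfl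
    intro i hi
    rw [hpre i (Finset.mem_range.mp hi)]
  have hdgx : dg s x k = (stp (ss s x k) false).1 := by unfold dg; rw [hbx]
  have hdgy : dg s y k = (stp (ss s x k) true).1 := by unfold dg; rw [hss k le_rfl, hby]
  have hd01 := stp_false_lt_true (ss s x k)
  have hTx : f (ss s x (k+1)) (xs x (k+1)) < 1 := f_lt_one (xs_mem hx (k+1))
  have hTy : 0 ≤ f (ss s y (k+1)) (xs y (k+1)) := f_nonneg _ _
  have hp4 : (0:ℝ) < 4^(k+1) := by positivity
  have hcast : ((dg s x k : ℝ)) + 1 ≤ (dg s y k : ℝ) := by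
    rw [hdgx, hdgy]
    exact_mod_cast hd01
  rw [hfx, hfy, hsum]
  have key : (dg s x k : ℝ) / 4^(k+1) + f (ss s x (k+1)) (xs x (k+1)) / 4^(k+1)
      < (dg s y k : ℝ) / 4^(k+1) + f (ss s y (k+1)) (xs y (k+1)) / 4^(k+1) := by
    rw [← add_div, ← add_div]
    apply div_lt_div_of_pos_right _ hp4
    linarith
  linarith [key]

end HilbertAux

open HilbertAux HilbertAux.St


/-- The two-dimensional Hilbert curve `h : [0,1] → [0,1]²` is the 2-regular
space-filling curve determined by subdividing the unit square into four quadrants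
visited in the order lower-left, upper-left, upper-right, lower-right, where the
sub-curve in the first quadrant is the whole curve reflected in the diagonal `y = x`
(and scaled), the middle two quadrants carry translated scaled copies, and the last
quadrant carries the curve reflected in the anti-diagonal (the reflection
`(x, y) ↦ (1 - y, 1 - x)`), scaled and translated into place.  These conditions are
expressed by the functional equations `e1`–`e4` below.

The Hilbert curve admits a valid ordering `hinv` of the unit square (a right inverse
of `h` on `[0,1]²`) that is monotone along the bottom edge and along the ascending
diagonal: `hinv (t, 0)` is strictly increasing in `t ∈ [0,1]`, and `hinv (t, t)` is
strictly increasing in `t ∈ [0,1]`. -/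
theorem hilbert_curve_monotone_bottom_edge_and_diagonal
    (h : ℝ → ℝ × ℝ)
    (hcont : ContinuousOn h (Set.Icc 0 1))
    (hmaps : Set.MapsTo h (Set.Icc 0 1) (Set.Icc (0 : ℝ) 1 ×ˢ Set.Icc (0 : ℝ) 1))
    (hsurj : Set.SurjOn h (Set.Icc 0 1) (Set.Icc (0 : ℝ) 1 ×ˢ Set.Icc (0 : ℝ) 1))
    (e1 : ∀ t ∈ Set.Icc (0 : ℝ) 1, h (t / 4) = ((h t).2 / 2, (h t).1 / 2))
    (e2 : ∀ t ∈ Set.Icc (0 : ℝ) 1, h ((1 + t) / 4) = ((h t).1 / 2, (h t).2 / 2 + 1 / 2))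
    (e3 : ∀ t ∈ Set.Icc (0 : ℝ) 1,
      h ((2 + t) / 4) = ((h t).1 / 2 + 1 / 2, (h t).2 / 2 + 1 / 2))
    (e4 : ∀ t ∈ Set.Icc (0 : ℝ) 1,
      h ((3 + t) / 4) = ((1 - (h t).2) / 2 + 1 / 2, (1 - (h t).1) / 2)) :
    ∃ hinv : ℝ × ℝ → ℝ,
      (∀ p ∈ Set.Icc (0 : ℝ) 1 ×ˢ Set.Icc (0 : ℝ) 1,
        hinv p ∈ Set.Icc (0 : ℝ) 1 ∧ h (hinv p) = p) ∧
      StrictMonoOn (fun t : ℝ => hinv (t, 0)) (Set.Icc 0 1) ∧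
      StrictMonoOn (fun t : ℝ => hinv (t, t)) (Set.Icc 0 1) := by
  classical
  refine ⟨fun p =>
    if p.2 = 0 then (if p.1 = 1 then 1 else f B p.1)
    else if p.1 = p.2 then (if p.1 = 1 then 2/3 else f D p.1)
    else if hp : p ∈ Set.Icc (0 : ℝ) 1 ×ˢ Set.Icc (0 : ℝ) 1
      then (hsurj hp).choose else 0, ?_, ?_, ?_⟩
  · intro p hp
    have hp' := hp
    rw [Set.mem_prod] at hp'
    obtain ⟨⟨hp1a, hp1b⟩, hp2a, hp2b⟩ := hp'
    by_cases h20 : p.2 = 0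
    · by_cases h11 : p.1 = 1
      · simp only [if_pos h20, if_pos h11]
        refine ⟨by norm_num, ?_⟩
        rw [h_one e4, Prod.ext_iff]
        exact ⟨h11.symm, h20.symm⟩
      · have hx : p.1 ∈ Set.Ico (0:ℝ) 1 := ⟨hp1a, lt_of_le_of_ne hp1b h11⟩
        simp only [if_pos h20, if_neg h11]
        refine ⟨⟨f_nonneg _ _, f_le_one _ _⟩, ?_⟩
        rw [h_f hmaps e1 e2 e3 e4 B hx, Prod.ext_iff]
        exact ⟨rfl, h20.symm⟩
    · by_cases hdd : p.1 = p.2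
      · by_cases h11 : p.1 = 1
        · simp only [if_neg h20, if_pos hdd, if_pos h11]
          refine ⟨by norm_num, ?_⟩
          rw [h_twothirds e3, Prod.ext_iff]
          exact ⟨h11.symm, (hdd ▸ h11).symm⟩
        · have hx : p.1 ∈ Set.Ico (0:ℝ) 1 := ⟨hp1a, lt_of_le_of_ne hp1b h11⟩
          simp only [if_neg h20, if_pos hdd, if_neg h11]
          refine ⟨⟨f_nonneg _ _, f_le_one _ _⟩, ?_⟩
          rw [h_f hmaps e1 e2 e3 e4 D hx, Prod.ext_iff]
          exact ⟨rfl, hdd⟩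
      · simp only [if_neg h20, if_neg hdd, dif_pos hp]
        exact ⟨(hsurj hp).choose_spec.1, (hsurj hp).choose_spec.2⟩
  · -- bottom edge
    intro a ha b hb hab
    have ev : ∀ t : ℝ, (if ((t, (0:ℝ)).2 = 0) then (if (t, (0:ℝ)).1 = 1 then (1:ℝ)
          else f B (t, (0:ℝ)).1)
        else if (t, (0:ℝ)).1 = (t, (0:ℝ)).2 then (if (t, (0:ℝ)).1 = 1 then 2/3
          else f D (t, (0:ℝ)).1)
        else if hp : (t, (0:ℝ)) ∈ Set.Icc (0 : ℝ) 1 ×ˢ Set.Icc (0 : ℝ) 1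
          then (hsurj hp).choose else 0)
        = if t = 1 then (1:ℝ) else f B t := by
      intro t
      rw [if_pos rfl]
    show (if ((a, (0:ℝ)).2 = 0) then (if (a, (0:ℝ)).1 = 1 then (1:ℝ)
          else f B (a, (0:ℝ)).1)
        else if (a, (0:ℝ)).1 = (a, (0:ℝ)).2 then (if (a, (0:ℝ)).1 = 1 then 2/3
          else f D (a, (0:ℝ)).1)
        else if hp : (a, (0:ℝ)) ∈ Set.Icc (0 : ℝ) 1 ×ˢ Set.Icc (0 : ℝ) 1
          then (hsurj hp).choose else 0) < (if ((b, (0:ℝ)).2 = 0) then (if (b, (0:ℝ)).1 = 1 then (1:ℝ)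
          else f B (b, (0:ℝ)).1)
        else if (b, (0:ℝ)).1 = (b, (0:ℝ)).2 then (if (b, (0:ℝ)).1 = 1 then 2/3
          else f D (b, (0:ℝ)).1)
        else if hp : (b, (0:ℝ)) ∈ Set.Icc (0 : ℝ) 1 ×ˢ Set.Icc (0 : ℝ) 1
          then (hsurj hp).choose else 0)
    rw [ev a, ev b]
    by_cases hb1 : b = 1
    · have ha1 : a ≠ 1 := by intro hc; rw [hc, hb1] at hab; exact lt_irrefl _ hab
      rw [if_pos hb1, if_neg ha1]
      exact f_lt_one ⟨ha.1, lt_of_le_of_ne ha.2 ha1⟩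
    · have ha1 : a ≠ 1 := by
        intro hc
        exact absurd (lt_of_lt_of_le (hc ▸ hab) hb.2) (lt_irrefl 1)
      rw [if_neg hb1, if_neg ha1]
      exact f_mono B ⟨ha.1, lt_of_le_of_ne ha.2 ha1⟩ ⟨hb.1, lt_of_le_of_ne hb.2 hb1⟩ hab
  · -- diagonal
    intro a ha b hb hab
    have ev : ∀ t : ℝ, (if ((t, t).2 = 0) then (if (t, t).1 = 1 then (1:ℝ)
          else f B (t, t).1)
        else if (t, t).1 = (t, t).2 then (if (t, t).1 = 1 then 2/3
          else f D (t, t).1)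
        else if hp : (t, t) ∈ Set.Icc (0 : ℝ) 1 ×ˢ Set.Icc (0 : ℝ) 1
          then (hsurj hp).choose else 0)
        = if t = 0 then (0:ℝ) else if t = 1 then 2/3 else f D t := by
      intro t
      by_cases ht0 : t = 0
      · rw [if_pos ht0]
        have : ((t, t).2 = 0) := ht0
        rw [if_pos this]
        have ht1 : (t, t).1 ≠ 1 := by simp [ht0]
        rw [if_neg ht1, ht0]
        exact f_zero (by simp)
      · have : ¬ ((t, t).2 = 0) := ht0
        rw [if_neg this, if_pos rfl, if_neg ht0]
    show (if ((a, a).2 = 0) then (if (a, a).1 = 1 then (1:ℝ)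
          else f B (a, a).1)
        else if (a, a).1 = (a, a).2 then (if (a, a).1 = 1 then 2/3
          else f D (a, a).1)
        else if hp : (a, a) ∈ Set.Icc (0 : ℝ) 1 ×ˢ Set.Icc (0 : ℝ) 1
          then (hsurj hp).choose else 0) < (if ((b, b).2 = 0) then (if (b, b).1 = 1 then (1:ℝ)
          else f B (b, b).1)
        else if (b, b).1 = (b, b).2 then (if (b, b).1 = 1 then 2/3
          else f D (b, b).1)
        else if hp : (b, b) ∈ Set.Icc (0 : ℝ) 1 ×ˢ Set.Icc (0 : ℝ) 1
          then (hsurj hp).choose else 0)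
    rw [ev a, ev b]
    have hb0 : b ≠ 0 := by intro hc; rw [hc] at hab; exact absurd (lt_of_le_of_lt ha.1 hab) (lt_irrefl 0)
    rw [if_neg hb0]
    by_cases ha0 : a = 0
    · rw [if_pos ha0]
      by_cases hb1 : b = 1
      · rw [if_pos hb1]; norm_num
      · rw [if_neg hb1]
        exact fD_pos ⟨hb.1, lt_of_le_of_ne hb.2 hb1⟩
          (lt_of_le_of_ne hb.1 (Ne.symm hb0))
    · rw [if_neg ha0]
      have ha1 : a ≠ 1 := by
        intro hc
        rw [hc] at hab
        exact absurd (lt_of_lt_of_le hab hb.2) (lt_irrefl 1)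
      rw [if_neg ha1]
      have hax : a ∈ Set.Ico (0:ℝ) 1 := ⟨ha.1, lt_of_le_of_ne ha.2 ha1⟩
      by_cases hb1 : b = 1
      · rw [if_pos hb1]
        exact fD_lt hax
      · rw [if_neg hb1]
        exact f_mono D hax ⟨hb.1, lt_of_le_of_ne hb.2 hb1⟩ hab
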